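/- For every n-qubit mixed state ρ, 4^n · Σ_{x ∈ 𝔽₂^{2n}} p_ρ(x)³ ≥ F(ρ)^6, where F(ρ) is the stabilizer fidelity of ρ. -/

import Mathlib

open scoped BigOperators ComplexOrder

/-- The phase space `𝔽₂^{2n}`, written as pairs `(a, b)` with `a, b ∈ 𝔽₂ⁿ`. -/
abbrev PhaseSpace (n : ℕ) := (Fin n → ZMod 2) × (Fin n → ZMod 2)

/-- The symplectic product `[x, y] = a·d + b·c` for `x = (a,b)`, `y = (c,d)`. -/
def sympl {n : ℕ} (x y : PhaseSpace n) : ZMod 2 :=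
  ∑ i, x.1 i * y.2 i + ∑ i, x.2 i * y.1 i

/-- The symplectic Fourier transform `f̂(a) = 4^{-n} ∑_x (-1)^{[a,x]} f(x)`. -/
noncomputable def sft {n : ℕ} (f : PhaseSpace n → ℝ) (a : PhaseSpace n) : ℝ :=
  (1 / 4 ^ n) * ∑ x, (-1 : ℝ) ^ (sympl a x).val * f x

/-- The symplectic complement of a set `S ⊆ 𝔽₂^{2n}`. -/
def symplComplement {n : ℕ} (S : Set (PhaseSpace n)) : Set (PhaseSpace n) :=
  {x | ∀ a ∈ S, sympl x a = 0}

/-- The Weyl operator `W_x = i^{a·b} X^a Z^b` for `x = (a,b)`, as a `2^n × 2^n` matrix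
indexed by `𝔽₂ⁿ`: `(W_x)_{k,j} = i^{a·b} (-1)^{b·j} [k = j + a]`. -/
noncomputable def Weyl {n : ℕ} (x : PhaseSpace n) :
    Matrix (Fin n → ZMod 2) (Fin n → ZMod 2) ℂ :=
  fun k j => Complex.I ^ (∑ i, (x.1 i).val * (x.2 i).val) *
    (if k = j + x.1 then (-1 : ℂ) ^ (∑ i, (x.2 i).val * (j i).val) else 0)

/-- `p_H(x) = 2^{-n} tr(W_x H)²` (the trace is real for Hermitian `H`). -/
noncomputable def pFun {n : ℕ} (H : Matrix (Fin n → ZMod 2) (Fin n → ZMod 2) ℂ)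
    (x : PhaseSpace n) : ℝ :=
  ((Weyl x * H).trace.re) ^ 2 / 2 ^ n

/-- A set is Lagrangian if it equals its symplectic complement. -/
def IsLagrangian {n : ℕ} (S : Set (PhaseSpace n)) : Prop :=
  S = symplComplement S

/-- The outer product `|φ⟩⟨φ|` of a vector `φ ∈ ℂ^{2^n}`. -/
noncomputable def outer {n : ℕ} (φ : (Fin n → ZMod 2) → ℂ) :
    Matrix (Fin n → ZMod 2) (Fin n → ZMod 2) ℂ :=
  Matrix.vecMulVec φ (fun j => starRingEnd ℂ (φ j))

/-- `Weyl(σ) = {x : tr(W_x σ) = ±1}`. -/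
def weylSet {n : ℕ} (σ : Matrix (Fin n → ZMod 2) (Fin n → ZMod 2) ℂ) :
    Set (PhaseSpace n) :=
  {x | (Weyl x * σ).trace = 1 ∨ (Weyl x * σ).trace = -1}

/-- A unit vector `φ` is a stabilizer state iff `Weyl(|φ⟩⟨φ|)` is Lagrangian. -/
def IsStabilizerState {n : ℕ} (φ : (Fin n → ZMod 2) → ℂ) : Prop :=
  (∑ j, Complex.normSq (φ j)) = 1 ∧ IsLagrangian (weylSet (outer φ))

/-- The stabilizer fidelity `F(ρ) = max_{stabilizer |φ⟩} ⟨φ|ρ|φ⟩ = max tr(ρ|φ⟩⟨φ|)`. -/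
noncomputable def stabFidelity {n : ℕ}
    (ρ : Matrix (Fin n → ZMod 2) (Fin n → ZMod 2) ℂ) : ℝ :=
  ⨆ φ : {φ : (Fin n → ZMod 2) → ℂ // IsStabilizerState φ}, ((ρ * outer φ.1).trace).re


open Finset in
noncomputable def chi (z : ZMod 2) : ℂ := if z = 0 then 1 else -1

lemma chi_zero : chi 0 = 1 := by simp [chi]

lemma zmod2_cases (z : ZMod 2) : z = 0 ∨ z = 1 := by revert z; decide

lemma chi_add (a b : ZMod 2) : chi (a + b) = chi a * chi b := by
  have h : (1 + 1 : ZMod 2) = 0 := by decide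
  rcases zmod2_cases a with rfl | rfl <;> rcases zmod2_cases b with rfl | rfl <;> simp [chi, h]

lemma chi_val (z : ZMod 2) : ((-1:ℂ)) ^ z.val = chi z := by
  have h1 : (1 : ZMod 2).val = 1 := rfl
  rcases zmod2_cases z with rfl | rfl <;> simp [chi, h1]

lemma chi_mulval (u v : ZMod 2) : (-1:ℂ) ^ ((u.val) * (v.val)) = chi (u * v) := by
  have h1 : (1 : ZMod 2).val = 1 := rfl
  rcases zmod2_cases u with rfl | rfl <;> rcases zmod2_cases v with rfl | rfl <;> simp [chi, h1]

lemma chi_sq (z : ZMod 2) : chi z * chi z = 1 := by rcases zmod2_cases z with rfl | rfl <;> simp [chi]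

lemma chi_ne (z : ZMod 2) (h : z ≠ 0) : chi z = -1 := by simp [chi, h]

lemma chi_nonzero (z : ZMod 2) : chi z ≠ 0 := by rcases zmod2_cases z with rfl | rfl <;> simp [chi]

lemma chi_sum {ι : Type*} (s : Finset ι) (f : ι → ZMod 2) :
    chi (∑ i ∈ s, f i) = ∏ i ∈ s, chi (f i) := by
  induction s using Finset.cons_induction with
  | empty => simp [chi]
  | cons a s ha ih => rw [Finset.sum_cons, Finset.prod_cons, chi_add, ih]

noncomputable def bil {n : ℕ} (u v : Fin n → ZMod 2) : ℂ := ∏ i, chi (u i * v i)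

lemma pow_eq_bil {n : ℕ} (u v : Fin n → ZMod 2) :
    (-1:ℂ) ^ (∑ i, (u i).val * (v i).val) = bil u v := by
  rw [← Finset.prod_pow_eq_pow_sum]
  exact Finset.prod_congr rfl fun i _ => chi_mulval _ _

lemma bil_comm {n : ℕ} (u v : Fin n → ZMod 2) : bil u v = bil v u := by
  unfold bil; exact Finset.prod_congr rfl fun i _ => by rw [mul_comm]

lemma bil_add_right {n : ℕ} (u v w : Fin n → ZMod 2) : bil u (v + w) = bil u v * bil u w := by
  unfold bil
  rw [← Finset.prod_mul_distrib]
  exact Finset.prod_congr rfl fun i _ => by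
    rw [Pi.add_apply, mul_add, chi_add]

lemma bil_sq {n : ℕ} (u v : Fin n → ZMod 2) : bil u v * bil u v = 1 := by
  unfold bil
  rw [← Finset.prod_mul_distrib]
  exact Finset.prod_eq_one fun i _ => chi_sq _

lemma bil_conj {n : ℕ} (u v : Fin n → ZMod 2) : (starRingEnd ℂ) (bil u v) = bil u v := by
  rw [← pow_eq_bil]; rw [map_pow]; norm_num

lemma sum_chi_single (w : ZMod 2) : ∑ y : ZMod 2, chi (y * w) = if w = 0 then 2 else 0 := by
  have hs : (Finset.univ : Finset (ZMod 2)) = {0, 1} := by decide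
  rw [hs, Finset.sum_insert (by decide), Finset.sum_singleton]
  rcases zmod2_cases w with rfl | rfl <;> simp [chi] <;> norm_num

lemma sum_bil_left {n : ℕ} (v : Fin n → ZMod 2) :
    ∑ u : Fin n → ZMod 2, bil u v = if v = 0 then (2:ℂ)^n else 0 := by
  unfold bil
  have h1 : ∑ u : Fin n → ZMod 2, ∏ i, chi (u i * v i)
      = ∏ i, ∑ y : ZMod 2, chi (y * v i) := by
    rw [Finset.prod_univ_sum]
    rw [Fintype.piFinset_univ]
  rw [h1]
  simp_rw [sum_chi_single]
  by_cases hv : v = 0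
  · subst hv; simp
  · rw [if_neg hv]
    obtain ⟨i, hi⟩ : ∃ i, v i ≠ 0 := by
      by_contra h; push_neg at h; exact hv (funext h)
    exact Finset.prod_eq_zero (Finset.mem_univ i) (by simp [hi])

variable {n : ℕ}

lemma vadd_cancel (a b : Fin n → ZMod 2) : a + b + b = a := by
  funext i; simp [add_assoc, CharTwo.add_self_eq_zero]

lemma eq_flip (a k j : Fin n → ZMod 2) : (k = j + a) ↔ (j = k + a) := by
  constructor
  · rintro rfl; rw [vadd_cancel]
  · rintro rfl; rw [vadd_cancel]

-- the Weyl matrix entry in bil form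
lemma weyl_apply (x : PhaseSpace n) (k j : Fin n → ZMod 2) :
    Weyl x k j = Complex.I ^ (∑ i, (x.1 i).val * (x.2 i).val) *
      (if k = j + x.1 then bil x.2 j else 0) := by
  unfold Weyl
  congr 1
  split
  · rw [pow_eq_bil]
  · rfl

lemma sum_shift (a : Fin n → ZMod 2) (f : (Fin n → ZMod 2) → ℂ) :
    ∑ k : Fin n → ZMod 2, f (k + a) = ∑ k, f k :=
  Fintype.sum_equiv (Equiv.addRight a) _ _ (fun k => rfl)

lemma trace_weyl_mul (x : PhaseSpace n) (M : Matrix (Fin n → ZMod 2) (Fin n → ZMod 2) ℂ) :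
    (Weyl x * M).trace = Complex.I ^ (∑ i, (x.1 i).val * (x.2 i).val) *
      ∑ j, bil x.2 j * M j (j + x.1) := by
  rw [Matrix.trace]
  have h1 : ∀ k, (Weyl x * M).diag k
      = Complex.I ^ (∑ i, (x.1 i).val * (x.2 i).val) * (bil x.2 (k + x.1) * M (k + x.1) k) := by
    intro k
    rw [Matrix.diag_apply, Matrix.mul_apply]
    have : ∀ j, Weyl x k j * M j k
        = if j = k + x.1 then Complex.I ^ (∑ i, (x.1 i).val * (x.2 i).val) * (bil x.2 j * M j k) else 0 := by
      intro j
      rw [weyl_apply]; simp only [eq_flip x.1 k j]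
      split <;> ring
    simp_rw [this]
    rw [Finset.sum_ite_eq' Finset.univ (k + x.1)]
    simp
  simp_rw [h1]
  rw [← Finset.mul_sum]
  congr 1
  have := sum_shift (n := n) x.1 (fun j => bil x.2 j * M j (j + x.1))
  rw [← this]
  apply Finset.sum_congr rfl
  intro k _
  rw [vadd_cancel]

lemma I_sq_pow (s : ℕ) : (Complex.I ^ s) * (Complex.I ^ s) = (-1:ℂ) ^ s := by
  rw [← mul_pow, Complex.I_mul_I]

lemma add_self_zero (w : Fin n → ZMod 2) : w + w = 0 := by
  funext i; exact CharTwo.add_self_eq_zero _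

lemma key_expand (M : Matrix (Fin n → ZMod 2) (Fin n → ZMod 2) ℂ) (u v : Fin n → ZMod 2) :
    ∑ x : PhaseSpace n, (Weyl x * M).trace * Weyl x u v = (2:ℂ)^n * M u v := by
  have hterm : ∀ x : PhaseSpace n, (Weyl x * M).trace * Weyl x u v
      = if x.1 = u + v then
          (bil x.1 x.2 * bil x.2 v) * ∑ j, bil x.2 j * M j (j + x.1) else 0 := by
    intro x
    rw [trace_weyl_mul, weyl_apply]
    have hc : (u = v + x.1) ↔ (x.1 = u + v) := by
      rw [add_comm v x.1]; exact eq_flip v u x.1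
    simp only [hc]
    split
    · rw [← pow_eq_bil x.1 x.2, ← I_sq_pow]; ring
    · ring
  rw [Fintype.sum_prod_type]
  have hinner : ∀ a : Fin n → ZMod 2,
      (∑ b : Fin n → ZMod 2, ((Weyl (a, b) * M).trace * Weyl (a, b) u v))
      = if a = u + v then
          ∑ b : Fin n → ZMod 2, (bil a b * bil b v) * ∑ j, bil b j * M j (j + a) else 0 := by
    intro a
    by_cases h : a = u + v
    · rw [if_pos h]
      exact Finset.sum_congr rfl fun b _ => by rw [hterm (a, b)]; simp [h]
    · rw [if_neg h]
      exact Finset.sum_eq_zero fun b _ => by rw [hterm (a, b)]; simp [h]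
  simp_rw [hinner]
  rw [Finset.sum_ite_eq' Finset.univ (u + v)]
  rw [if_pos (Finset.mem_univ _)]
  set a := u + v with ha
  have h2 : ∀ b : Fin n → ZMod 2, (bil a b * bil b v) * ∑ j, bil b j * M j (j + a)
      = ∑ j, bil b ((a + v) + j) * M j (j + a) := by
    intro b
    rw [Finset.mul_sum]
    refine Finset.sum_congr rfl fun j _ => ?_
    rw [bil_add_right b (a + v) j, bil_add_right b a v, bil_comm a b]
    ring
  simp_rw [h2]
  rw [Finset.sum_comm]
  have h3 : ∀ j : Fin n → ZMod 2, ∑ b : Fin n → ZMod 2, bil b ((a + v) + j) * M j (j + a)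
      = (if (a + v) + j = 0 then (2:ℂ)^n else 0) * M j (j + a) := by
    intro j; rw [← Finset.sum_mul, sum_bil_left]
  simp_rw [h3]
  have h4 : ∀ j : Fin n → ZMod 2, ((a + v) + j = 0) ↔ (j = a + v) := by
    intro j
    constructor
    · intro h
      have := congrArg (· + j) h
      simp only [zero_add] at this
      rw [vadd_cancel] at this
      exact this.symm
    · rintro rfl; exact add_self_zero _
  simp_rw [h4, ite_mul, zero_mul]
  rw [Finset.sum_ite_eq' Finset.univ (a + v)]
  rw [if_pos (Finset.mem_univ _)]
  have e1 : a + v = u := by rw [ha, vadd_cancel]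
  have e2 : u + a = v := by rw [ha, ← add_assoc, add_self_zero, zero_add]
  rw [e1, e2]

lemma parseval (A B : Matrix (Fin n → ZMod 2) (Fin n → ZMod 2) ℂ) :
    ∑ x : PhaseSpace n, (Weyl x * A).trace * (Weyl x * B).trace = (2:ℂ)^n * (A * B).trace := by
  have htr : ∀ x : PhaseSpace n, (Weyl x * A).trace = ∑ u, ∑ v, Weyl x u v * A v u := by
    intro x
    rw [Matrix.trace]
    exact Finset.sum_congr rfl fun u _ => by rw [Matrix.diag_apply, Matrix.mul_apply]
  calc ∑ x : PhaseSpace n, (Weyl x * A).trace * (Weyl x * B).trace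
      = ∑ x : PhaseSpace n, ∑ u, ∑ v, A v u * ((Weyl x * B).trace * Weyl x u v) := by
        refine Finset.sum_congr rfl fun x _ => ?_
        rw [htr x, Finset.sum_mul]
        refine Finset.sum_congr rfl fun u _ => ?_
        rw [Finset.sum_mul]
        exact Finset.sum_congr rfl fun v _ => by ring
    _ = ∑ u, ∑ v, A v u * ∑ x : PhaseSpace n, ((Weyl x * B).trace * Weyl x u v) := by
        rw [Finset.sum_comm]
        refine Finset.sum_congr rfl fun u _ => ?_
        rw [Finset.sum_comm]
        exact Finset.sum_congr rfl fun v _ => (Finset.mul_sum _ _ _).symm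
    _ = ∑ u, ∑ v, A v u * ((2:ℂ)^n * B u v) := by
        simp_rw [key_expand]
    _ = (2:ℂ)^n * (A * B).trace := by
        rw [Matrix.trace, Finset.mul_sum]
        rw [Finset.sum_comm]
        refine Finset.sum_congr rfl fun v _ => ?_
        rw [Matrix.diag_apply, Matrix.mul_apply, Finset.mul_sum]
        exact Finset.sum_congr rfl fun u _ => by ring

lemma weyl_conjTranspose (x : PhaseSpace n) : Matrix.conjTranspose (Weyl x) = Weyl x := by
  ext k j
  rw [Matrix.conjTranspose_apply, weyl_apply, weyl_apply]
  simp only [Complex.star_def]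
  rw [map_mul, apply_ite (starRingEnd ℂ), map_zero, bil_conj]
  have hI : (starRingEnd ℂ) (Complex.I ^ (∑ i, (x.1 i).val * (x.2 i).val))
      = bil x.1 x.2 * Complex.I ^ (∑ i, (x.1 i).val * (x.2 i).val) := by
    rw [map_pow, Complex.conj_I, ← pow_eq_bil, ← mul_pow]
    congr 1
    ring
  rw [hI]
  simp only [eq_flip x.1 j k]
  split
  · rename_i h
    rw [h, bil_add_right]
    have : bil x.1 x.2 * bil x.2 x.1 = 1 := by rw [bil_comm x.1 x.2, bil_sq]
    calc bil x.1 x.2 * Complex.I ^ (∑ i, (x.1 i).val * (x.2 i).val) * (bil x.2 j * bil x.2 x.1)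
        = (bil x.1 x.2 * bil x.2 x.1) * (Complex.I ^ (∑ i, (x.1 i).val * (x.2 i).val) * bil x.2 j) := by ring
      _ = Complex.I ^ (∑ i, (x.1 i).val * (x.2 i).val) * bil x.2 j := by rw [this, one_mul]
  · simp

lemma trace_real {H : Matrix (Fin n → ZMod 2) (Fin n → ZMod 2) ℂ}
    (hH : Matrix.conjTranspose H = H) (x : PhaseSpace n) :
    ((((Weyl x * H).trace).re : ℂ)) = (Weyl x * H).trace := by
  rw [← Complex.conj_eq_iff_re]
  calc (starRingEnd ℂ) ((Weyl x * H).trace)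
      = (Matrix.conjTranspose (Weyl x * H)).trace := by
        rw [Matrix.trace_conjTranspose]; rfl
    _ = (Matrix.conjTranspose H * Matrix.conjTranspose (Weyl x)).trace := by
        rw [Matrix.conjTranspose_mul]
    _ = (H * Weyl x).trace := by rw [hH, weyl_conjTranspose]
    _ = (Weyl x * H).trace := Matrix.trace_mul_comm _ _

lemma outer_herm (φ : (Fin n → ZMod 2) → ℂ) :
    Matrix.conjTranspose (outer φ) = outer φ := by
  ext k j
  simp only [Matrix.conjTranspose_apply, outer, Matrix.vecMulVec_apply, Complex.star_def,
    map_mul, RingHomCompTriple.comp_apply, Complex.conj_conj]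
  simp [mul_comm]

lemma sympl_add_left (x y a : PhaseSpace n) :
    sympl (x + y) a = sympl x a + sympl y a := by
  simp only [sympl, Prod.fst_add, Prod.snd_add, Pi.add_apply, add_mul,
    Finset.sum_add_distrib]
  ring

lemma sympl_add_right (x a b : PhaseSpace n) :
    sympl x (a + b) = sympl x a + sympl x b := by
  simp only [sympl, Prod.fst_add, Prod.snd_add, Pi.add_apply, mul_add,
    Finset.sum_add_distrib]
  ring

lemma sympl_zero_left (a : PhaseSpace n) : sympl 0 a = 0 := by
  simp [sympl]

lemma sympl_zero_right (x : PhaseSpace n) : sympl x 0 = 0 := by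
  simp [sympl]

lemma chi_sympl (x a : PhaseSpace n) :
    chi (sympl x a) = bil x.1 a.2 * bil x.2 a.1 := by
  rw [sympl, chi_add, chi_sum, chi_sum]
  rfl

lemma sum_chi_sympl (a : PhaseSpace n) :
    ∑ x : PhaseSpace n, chi (sympl x a) = if a = 0 then (4:ℂ)^n else 0 := by
  simp_rw [chi_sympl]
  rw [Fintype.sum_prod_type]
  have : ∀ p : Fin n → ZMod 2, ∑ q : Fin n → ZMod 2, bil p a.2 * bil q a.1
      = bil p a.2 * (if a.1 = 0 then (2:ℂ)^n else 0) := by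
    intro p; rw [← Finset.mul_sum, sum_bil_left]
  simp_rw [this]
  rw [← Finset.sum_mul, sum_bil_left]
  by_cases h1 : a.1 = 0 <;> by_cases h2 : a.2 = 0 <;>
    simp [h1, h2, Prod.ext_iff, ← mul_pow]
  · norm_num

lemma card_lagrangian (L : Set (PhaseSpace n)) (hL : IsLagrangian L)
    [DecidablePred (· ∈ L)] :
    (Finset.univ.filter (· ∈ L)).card = 2 ^ n := by
  set Lf := Finset.univ.filter (· ∈ L) with hLf
  have hmemL : ∀ x, x ∈ Lf ↔ x ∈ L := by
    intro x; simp [hLf]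
  have hzero : (0 : PhaseSpace n) ∈ L := by
    rw [hL]
    intro a _
    exact sympl_zero_left a
  have hadd : ∀ a b : PhaseSpace n, a ∈ L → b ∈ L → a + b ∈ L := by
    intro a b ha hb
    rw [hL]
    intro c hc
    rw [hL] at ha hb
    rw [sympl_add_left, ha c hc, hb c hc, add_zero]
  -- inner character sum
  have claim1 : ∀ x : PhaseSpace n, (∑ a ∈ Lf, chi (sympl x a))
      = if x ∈ L then (Lf.card : ℂ) else 0 := by
    intro x
    by_cases hx : x ∈ L
    · rw [if_pos hx]
      rw [Finset.sum_congr rfl (fun a ha => ?_), Finset.sum_const, nsmul_eq_mul, mul_one]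
      have : sympl x a = 0 := by
        have hx' : x ∈ symplComplement L := by rw [← hL]; exact hx
        exact hx' a ((hmemL a).mp ha)
      rw [this, chi_zero]
    · rw [if_neg hx]
      have hx' : x ∉ symplComplement L := by rw [← hL]; exact hx
      simp only [symplComplement, Set.mem_setOf_eq, not_forall] at hx'
      obtain ⟨a₀, ha₀L, ha₀⟩ := hx'
      refine Finset.sum_involution (fun a _ => a + a₀) ?_ ?_ ?_ ?_
      · intro a _
        rw [sympl_add_right, chi_add, chi_ne _ ha₀]
        ring
      · intro a _ _ hcontra
        have h0 : a₀ = 0 := add_eq_left.mp hcontra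
        rw [h0, sympl_zero_right] at ha₀
        exact ha₀ rfl
      · intro a ha
        exact (hmemL _).mpr (hadd _ _ ((hmemL a).mp ha) ha₀L)
      · intro a _
        show a + a₀ + a₀ = a
        calc a + a₀ + a₀ = a + (a₀ + a₀) := by rw [add_assoc]
          _ = a := by
              have : a₀ + a₀ = 0 := by
                ext : 1 <;> exact add_self_zero _
              rw [this, add_zero]
  -- double counting
  have hdouble : ((Lf.card : ℂ)) * (Lf.card : ℂ) = (4:ℂ)^n := by
    have h1 : (∑ a ∈ Lf, ∑ x : PhaseSpace n, chi (sympl x a)) = (4:ℂ)^n := by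
      rw [Finset.sum_congr rfl (fun a _ => sum_chi_sympl a)]
      rw [Finset.sum_ite_eq' Lf 0]
      rw [if_pos ((hmemL 0).mpr hzero)]
    have h2 : (∑ x : PhaseSpace n, ∑ a ∈ Lf, chi (sympl x a)) = (Lf.card : ℂ) * Lf.card := by
      rw [Finset.sum_congr rfl (fun x _ => claim1 x)]
      rw [← Finset.sum_filter, ← hLf, Finset.sum_const, nsmul_eq_mul]
    rw [← h2, Finset.sum_comm, h1]
  have hnat : Lf.card * Lf.card = 2^n * 2^n := by
    have : ((Lf.card * Lf.card : ℕ) : ℂ) = ((2^n * 2^n : ℕ) : ℂ) := by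
      push_cast
      rw [hdouble, ← mul_pow]
      norm_num
    exact_mod_cast this
  exact Nat.mul_self_inj.mp (by rw [hnat])

lemma trace_mul_outer (A : Matrix (Fin n → ZMod 2) (Fin n → ZMod 2) ℂ)
    (φ : (Fin n → ZMod 2) → ℂ) :
    (A * outer φ).trace = dotProduct (star φ) (A.mulVec φ) := by
  rw [Matrix.trace, dotProduct]
  refine Finset.sum_congr rfl fun u _ => ?_
  rw [Matrix.diag_apply, Matrix.mul_apply, Matrix.mulVec, dotProduct, Finset.mul_sum]
  refine Finset.sum_congr rfl fun v _ => ?_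
  simp only [outer, Matrix.vecMulVec_apply, Pi.star_apply, Complex.star_def]
  ring

lemma trace_outer_nonneg {ρ : Matrix (Fin n → ZMod 2) (Fin n → ZMod 2) ℂ}
    (hρ : ρ.PosSemidef) (φ : (Fin n → ZMod 2) → ℂ) :
    0 ≤ ((ρ * outer φ).trace).re := by
  have h := hρ.dotProduct_mulVec_nonneg φ
  rw [Complex.le_def] at h
  rw [trace_mul_outer]
  simpa using h.1

lemma trace_outer_sq (φ : (Fin n → ZMod 2) → ℂ)
    (hφ : (∑ j, Complex.normSq (φ j)) = 1) :
    (outer φ * outer φ).trace = 1 := by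
  have : (outer φ * outer φ).trace
      = (∑ u, (φ u * (starRingEnd ℂ) (φ u))) * (∑ v, (φ v * (starRingEnd ℂ) (φ v))) := by
    rw [Matrix.trace, Finset.sum_mul_sum]
    refine Finset.sum_congr rfl fun u _ => ?_
    rw [Matrix.diag_apply, Matrix.mul_apply]
    refine Finset.sum_congr rfl fun v _ => ?_
    simp only [outer, Matrix.vecMulVec_apply]
    ring
  rw [this]
  have h2 : (∑ u, (φ u * (starRingEnd ℂ) (φ u))) = ((∑ j, Complex.normSq (φ j) : ℝ) : ℂ) := by
    push_cast
    refine Finset.sum_congr rfl fun u _ => ?_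
    rw [Complex.mul_conj]
  rw [h2, hφ]
  norm_num

lemma main_bound {ρ : Matrix (Fin n → ZMod 2) (Fin n → ZMod 2) ℂ}
    (hρ : ρ.PosSemidef) (φ : (Fin n → ZMod 2) → ℂ) (hφ : IsStabilizerState φ) :
    ((ρ * outer φ).trace).re ^ 6 ≤ 4 ^ n * ∑ x, (pFun ρ x) ^ 3 := by
  classical
  set P := outer φ with hPdef
  have hP : Matrix.conjTranspose P = P := outer_herm φ
  have hρH : Matrix.conjTranspose ρ = ρ := hρ.1
  set L := weylSet P with hLdef
  have hL : IsLagrangian L := hφ.2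
  set Lf := Finset.univ.filter (· ∈ L) with hLf
  have hcard : Lf.card = 2 ^ n := card_lagrangian L hL
  set c : PhaseSpace n → ℝ := fun x => ((Weyl x * P).trace).re with hcdef
  set d : PhaseSpace n → ℝ := fun x => ((Weyl x * ρ).trace).re with hddef
  have hc : ∀ x, ((c x : ℂ)) = (Weyl x * P).trace := fun x => trace_real hP x
  have hd : ∀ x, ((d x : ℂ)) = (Weyl x * ρ).trace := fun x => trace_real hρH x
  -- Parseval c c
  have hcc : ∑ x : PhaseSpace n, (c x) ^ 2 = 2 ^ n := by
    have h1 : ∑ x : PhaseSpace n, ((c x : ℂ)) * (c x) = (2:ℂ)^n := by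
      simp_rw [hc]
      rw [parseval P P, trace_outer_sq φ hφ.1, mul_one]
    have h2 : ((∑ x : PhaseSpace n, (c x)^2 : ℝ) : ℂ) = (((2:ℝ)^n : ℝ) : ℂ) := by
      push_cast
      simp_rw [sq]
      rw [h1]
    exact_mod_cast h2
  -- c = ±1 on L
  have hcL : ∀ x ∈ L, (c x) ^ 2 = 1 := by
    intro x hx
    have : c x = (Weyl x * P).trace.re := rfl
    rcases hx with h | h <;> rw [this, h] <;> norm_num
  -- c = 0 off L
  have hcoff : ∀ x, x ∉ L → c x = 0 := by
    intro x hx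
    have hsplit := Finset.sum_filter_add_sum_filter_not Finset.univ (· ∈ L)
      (fun x => (c x) ^ 2)
    have hsumL : ∑ x ∈ Lf, (c x) ^ 2 = 2 ^ n := by
      rw [Finset.sum_congr rfl (fun y hy => hcL y (Finset.mem_filter.mp hy).2),
        Finset.sum_const, hcard]
      simp
    have hrest : ∑ x ∈ Finset.univ.filter (fun x => ¬ x ∈ L), (c x) ^ 2 = 0 := by
      have h := hsplit
      rw [← hLf] at h
      linarith [h, hsumL, hcc]
    have hx0 : (c x) ^ 2 = 0 := by
      have hmem : x ∈ Finset.univ.filter (fun x => ¬ x ∈ L) := by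
        simp [hx]
      have hnn : ∀ y ∈ Finset.univ.filter (fun x => ¬ x ∈ L), 0 ≤ (c y)^2 :=
        fun y _ => sq_nonneg _
      exact (Finset.sum_eq_zero_iff_of_nonneg hnn).mp hrest x hmem
    exact pow_eq_zero_iff (by norm_num) |>.mp hx0
  -- mixed Parseval
  have hmix : 2 ^ n * ((ρ * P).trace).re = ∑ x : PhaseSpace n, c x * d x := by
    have h1 : ∑ x : PhaseSpace n, ((c x : ℂ)) * (d x) = (2:ℂ)^n * (ρ * P).trace := by
      simp_rw [hc, hd]
      rw [parseval P ρ, Matrix.trace_mul_comm]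
    have h2 : ((∑ x : PhaseSpace n, c x * d x : ℝ) : ℂ)
        = ((2:ℝ)^n : ℝ) * (ρ * P).trace := by
      push_cast
      rw [h1]
    have h3 := congrArg Complex.re h2
    rw [Complex.ofReal_re, Complex.re_ofReal_mul] at h3
    rw [← h3]
  set X := ((ρ * P).trace).re with hX
  have hXnn : 0 ≤ X := trace_outer_nonneg hρ φ
  -- restrict to Lf
  have hsub : ∑ x ∈ Lf, c x * d x = ∑ x : PhaseSpace n, c x * d x := by
    refine Finset.sum_subset (Finset.subset_univ Lf) ?_
    intro x _ hxLf
    have hxL : x ∉ L := by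
      intro h; exact hxLf (Finset.mem_filter.mpr ⟨Finset.mem_univ x, h⟩)
    rw [hcoff x hxL, zero_mul]
  have habs : ∀ x ∈ Lf, c x * d x ≤ |d x| := by
    intro x hxLf
    have hxL : x ∈ L := (Finset.mem_filter.mp hxLf).2
    have h1 : |c x| = 1 := by
      have := hcL x hxL
      nlinarith [abs_nonneg (c x), sq_abs (c x)]
    calc c x * d x ≤ |c x * d x| := le_abs_self _
      _ = |c x| * |d x| := abs_mul _ _
      _ = |d x| := by rw [h1, one_mul]
  have hchain : 2 ^ n * X ≤ ∑ x ∈ Lf, |d x| := by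
    rw [hmix, ← hsub]
    exact Finset.sum_le_sum habs
  set A := ∑ x ∈ Lf, |d x| with hA
  have hAnn : (0:ℝ) ≤ A := Finset.sum_nonneg fun x _ => abs_nonneg _
  set T := ∑ x : PhaseSpace n, (d x) ^ 6 with hT
  have hjensen : A ^ 6 / (Lf.card : ℝ) ^ 5 ≤ ∑ x ∈ Lf, |d x| ^ 6 := by
    exact pow_sum_div_card_le_sum_pow (f := fun x => |d x|)
      (fun i _ => abs_nonneg _) 5
  have habs6 : ∀ x, |d x| ^ 6 = (d x) ^ 6 := by
    intro x
    rw [← abs_pow, abs_of_nonneg (by positivity)]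
  have hsum6 : ∑ x ∈ Lf, |d x| ^ 6 ≤ T := by
    simp_rw [habs6]
    exact Finset.sum_le_sum_of_subset_of_nonneg (Finset.subset_univ Lf)
      (fun x _ _ => by positivity)
  have hq : (0:ℝ) < (2:ℝ) ^ n := by positivity
  have hA6 : A ^ 6 ≤ ((2:ℝ) ^ n) ^ 5 * T := by
    have h1 : A ^ 6 / ((2:ℝ)^n) ^ 5 ≤ T := by
      have h := hjensen.trans hsum6
      rw [hcard] at h
      push_cast at h
      exact h
    calc A ^ 6 = (A ^ 6 / ((2:ℝ)^n)^5) * ((2:ℝ)^n)^5 := by field_simp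
      _ ≤ T * ((2:ℝ)^n)^5 := by
          apply mul_le_mul_of_nonneg_right h1 (by positivity)
      _ = ((2:ℝ)^n)^5 * T := by ring
  have hX6 : X ^ 6 ≤ T / 2 ^ n := by
    have h1 : (2 ^ n * X) ^ 6 ≤ A ^ 6 :=
      pow_le_pow_left₀ (by positivity) hchain 6
    have h2 : ((2:ℝ)^n)^6 * X^6 ≤ ((2:ℝ)^n)^5 * T := by
      calc ((2:ℝ)^n)^6 * X^6 = (2^n * X)^6 := by ring
        _ ≤ A ^ 6 := h1
        _ ≤ ((2:ℝ)^n)^5 * T := hA6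
    rw [le_div_iff₀ hq]
    nlinarith [hq, pow_pos hq 5]
  -- identify RHS
  have hrhs : 4 ^ n * ∑ x, (pFun ρ x) ^ 3 = T / 2 ^ n := by
    unfold pFun
    rw [hT]
    have h4 : (4:ℝ)^n = (2:ℝ)^n * (2:ℝ)^n := by
      rw [← mul_pow]; norm_num
    rw [Finset.mul_sum, Finset.sum_div]
    refine Finset.sum_congr rfl fun x _ => ?_
    rw [div_pow, h4]
    have : (((Weyl x * ρ).trace.re) ^ 2) ^ 3 = (d x) ^ 6 := by
      rw [← pow_mul]
    rw [this]
    field_simp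
  rw [hrhs]
  exact hX6
/-- For every n-qubit mixed state ρ,
4^n ∑_x p_ρ(x)³ ≥ F(ρ)^6 where F is the stabilizer fidelity. -/
theorem sum_pFun_cube_ge_fidelity_pow_six {n : ℕ}
    (ρ : Matrix (Fin n → ZMod 2) (Fin n → ZMod 2) ℂ)
    (hρ : ρ.PosSemidef) (hτ : ρ.trace = 1) :
    4 ^ n * ∑ x, (pFun ρ x) ^ 3 ≥ (stabFidelity ρ) ^ 6 := by
  set S := 4 ^ n * ∑ x, (pFun ρ x) ^ 3 with hSdef
  have hS : 0 ≤ S := by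
    apply mul_nonneg (by positivity)
    apply Finset.sum_nonneg
    intro x _
    have : 0 ≤ pFun ρ x := by unfold pFun; positivity
    positivity
  set t := S ^ ((6:ℝ)⁻¹) with htdef
  have htnn : 0 ≤ t := Real.rpow_nonneg hS _
  have ht6 : t ^ (6:ℕ) = S := by
    rw [htdef, ← Real.rpow_natCast (S ^ ((6:ℝ)⁻¹)) 6, ← Real.rpow_mul hS]
    norm_num
  have hle : ∀ φ : {φ : (Fin n → ZMod 2) → ℂ // IsStabilizerState φ},
      ((ρ * outer φ.1).trace).re ≤ t := by
    intro φ
    refine le_of_pow_le_pow_left₀ (n := 6) (by norm_num) htnn ?_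
    rw [ht6]
    exact main_bound hρ φ.1 φ.2
  have hF : stabFidelity ρ ≤ t := Real.iSup_le hle htnn
  have hFnn : 0 ≤ stabFidelity ρ :=
    Real.iSup_nonneg fun φ => trace_outer_nonneg hρ φ.1
  have : (stabFidelity ρ) ^ 6 ≤ t ^ 6 := pow_le_pow_left₀ hFnn hF 6
  rw [ht6] at this
  exact this
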